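/- Let F be a totally real number field of degree d, and regard each fractional ideal of F as a full-rank ℤ-lattice in ℝ^d via the embedding x ↦ (σ(x))_σ given by the d real embeddings of F. Then there exist constants C, C' > 0 (depending only on F) such that C · r(Λ)^d ≤ D(Λ) ≤ C' · r(Λ)^d for every nonzero fractional ideal Λ of F. -/

import Mathlib

/- Statement 12 (Lemma `L4`): for a totally real number field `F` of degree `d`,
   with fractional ideals regarded as full-rank ℤ-lattices in `ℝ^d` via the `d` real
   embeddings, there are constants `C, C' > 0` with
   `C·r(Λ)^d ≤ D(Λ) ≤ C'·r(Λ)^d` for every nonzero fractional ideal `Λ`. -/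

open NumberField MeasureTheory Module
open scoped nonZeroDivisors

namespace Stmt12

variable (F : Type*) [Field F] [NumberField F]

/-- The embedding `x ↦ (σ(x))_σ` of `F` into `ℝ^d`, `d = [F:ℚ]`, given by an enumeration
`σ` of the real embeddings of `F`. -/
noncomputable def Phi (σ : Fin (finrank ℚ F) → (F →+* ℝ)) :
    F →ₗ[ℤ] EuclideanSpace ℝ (Fin (finrank ℚ F)) :=
  AddMonoidHom.toIntLinearMap
    { toFun := fun x => WithLp.toLp 2 (fun i => σ i x)
      map_zero' := by ext i; simp
      map_add' := fun x y => by ext i; simp }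

/-- The image of a fractional ideal of `F` in `ℝ^d`, as a ℤ-submodule. -/
noncomputable def latticeOf (σ : Fin (finrank ℚ F) → (F →+* ℝ))
    (Λ : FractionalIdeal (𝓞 F)⁰ F) :
    Submodule ℤ (EuclideanSpace ℝ (Fin (finrank ℚ F))) :=
  Submodule.map (Phi F σ) ((Λ : Submodule (𝓞 F) F).restrictScalars ℤ)

/-- `r(Λ) = (1/2)·min{‖b‖ : b ∈ Λ∖{0}}`. -/
noncomputable def rlat {d : ℕ} (L : Submodule ℤ (EuclideanSpace ℝ (Fin d))) : ℝ :=
  (1 / 2) * sInf {t : ℝ | ∃ b ∈ L, b ≠ 0 ∧ ‖b‖ = t}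

/-- `D(Λ)`: the covolume of the lattice `Λ`, i.e. the Euclidean volume of a fundamental
domain of `ℝ^d/Λ`. -/
noncomputable def covol {d : ℕ} (L : Submodule ℤ (EuclideanSpace ℝ (Fin d))) : ℝ :=
  ZLattice.covolume L

lemma abs_coord_le_norm {d : ℕ} (v : EuclideanSpace ℝ (Fin d)) (i : Fin d) : |v i| ≤ ‖v‖ := by
  rw [EuclideanSpace.norm_eq, ← Real.sqrt_sq_eq_abs]
  refine Real.sqrt_le_sqrt ?_
  have := Finset.single_le_sum (f := fun j : Fin d => ‖v j‖ ^ 2)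
    (fun j _ => sq_nonneg _) (Finset.mem_univ i)
  simpa [Real.norm_eq_abs, sq_abs] using this

set_option maxHeartbeats 2000000 in
theorem statement12
    (σ : Fin (finrank ℚ F) → (F →+* ℝ)) (hσ : Function.Bijective σ) :
    ∃ C > (0 : ℝ), ∃ C' > (0 : ℝ), ∀ Λ : FractionalIdeal (𝓞 F)⁰ F, Λ ≠ 0 →
      C * rlat (latticeOf F σ Λ) ^ (finrank ℚ F) ≤ covol (latticeOf F σ Λ) ∧
      covol (latticeOf F σ Λ) ≤ C' * rlat (latticeOf F σ Λ) ^ (finrank ℚ F) := by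
  classical
  let d : ℕ := finrank ℚ F
  have hd : 0 < d := finrank_pos
  have hd0 : d ≠ 0 := hd.ne'
  have hd' : (d : ℝ) ≠ 0 := Nat.cast_ne_zero.mpr hd0
  -- every complex embedding of `F` is real
  have hinjC : Function.Injective (fun ψ : F →+* ℝ => (Complex.ofRealHom.comp ψ)) := by
    intro a b h
    ext x
    have h2 : Complex.ofRealHom (a x) = Complex.ofRealHom (b x) := RingHom.congr_fun h x
    exact Complex.ofReal_injective h2
  have hsurjC : Function.Surjective (fun i : Fin d => Complex.ofRealHom.comp (σ i)) := by
    have hinj : Function.Injective (fun i : Fin d => Complex.ofRealHom.comp (σ i)) :=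
      hinjC.comp hσ.injective
    have hcard : Fintype.card (Fin d) = Fintype.card (F →+* ℂ) := by
      rw [Fintype.card_fin, Embeddings.card F ℂ]
    exact ((Fintype.bijective_iff_injective_and_card _).mpr ⟨hinj, hcard⟩).surjective
  have hreal : ∀ φ : F →+* ℂ, ComplexEmbedding.IsReal φ := by
    intro φ
    obtain ⟨i, rfl⟩ := hsurjC φ
    rw [ComplexEmbedding.isReal_iff]
    ext x
    simp [ComplexEmbedding.conjugate_coe_eq, Complex.conj_ofReal]
  have hwreal : ∀ w : InfinitePlace F, w.IsReal :=
    fun w => InfinitePlace.isReal_iff.mpr (hreal _)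
  haveI hempty : IsEmpty {w : InfinitePlace F // w.IsComplex} :=
    ⟨fun w => (InfinitePlace.not_isReal_iff_isComplex.mpr w.2) (hwreal w.1)⟩
  -- the bijection between `Fin d` and the real places
  let re : (F →+* ℝ) ≃ {φ : F →+* ℂ // ComplexEmbedding.IsReal φ} :=
  { toFun := fun ψ => ⟨Complex.ofRealHom.comp ψ, hreal _⟩
    invFun := fun φ => φ.2.embedding
    left_inv := fun ψ => by
      ext x
      exact Complex.ofReal_re _
    right_inv := fun φ => by
      refine Subtype.ext (RingHom.ext fun x => ?_)
      exact φ.2.coe_embedding_apply x }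
  let eqv : Fin d ≃ {w : InfinitePlace F // w.IsReal} :=
    ((Equiv.ofBijective σ hσ).trans re).trans InfinitePlace.mkReal
  have heqv : ∀ (i : Fin d) (x : F), InfinitePlace.embedding_of_isReal (eqv i).2 x = σ i x := by
    intro i x
    have h2 : ((eqv i : {w : InfinitePlace F // w.IsReal}) : InfinitePlace F).embedding
        = Complex.ofRealHom.comp (σ i) := by
      have h1 : ((eqv i : {w : InfinitePlace F // w.IsReal}) : InfinitePlace F)
          = InfinitePlace.mk (Complex.ofRealHom.comp (σ i)) :=
        InfinitePlace.mkReal_coe ⟨Complex.ofRealHom.comp (σ i), hreal _⟩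
      rw [h1, InfinitePlace.embedding_mk_eq_of_isReal (hreal _)]
    have h3 := InfinitePlace.embedding_of_isReal_apply (eqv i).2 x
    rw [h2] at h3
    rw [RingHom.comp_apply, Complex.ofRealHom_eq_coe] at h3
    exact_mod_cast h3
  have hPhiap : ∀ (x : F) (i : Fin d), Phi F σ x i = σ i x := fun _ _ => rfl
  have hPhiInj : Function.Injective (Phi F σ) := by
    intro a b h
    have h0 : Phi F σ a ⟨0, hd⟩ = Phi F σ b ⟨0, hd⟩ := by rw [h]
    exact (σ ⟨0, hd⟩).injective h0
  -- the continuous linear equiv with the mixed space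
  let eLin : EuclideanSpace ℝ (Fin d) ≃ₗ[ℝ] mixedEmbedding.mixedSpace F :=
  { toFun := fun v => (fun w => v (eqv.symm w), 0)
    map_add' := fun x y => by
      refine Prod.ext ?_ (by simp)
      funext w
      simp [PiLp.add_apply]
    map_smul' := fun c x => by
      refine Prod.ext ?_ (by simp)
      funext w
      simp [PiLp.smul_apply]
    invFun := fun p => WithLp.toLp 2 (fun i => p.1 (eqv i))
    left_inv := fun v => by
      ext i
      show v (eqv.symm (eqv i)) = v i
      rw [Equiv.symm_apply_apply]
    right_inv := fun p => by
      refine Prod.ext ?_ (Subsingleton.elim _ _)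
      funext w
      simp }
  let e : EuclideanSpace ℝ (Fin d) ≃L[ℝ] mixedEmbedding.mixedSpace F :=
    eLin.toContinuousLinearEquiv
  have he_apply : ∀ v : EuclideanSpace ℝ (Fin d), e v = (fun w => v (eqv.symm w), 0) :=
    fun _ => rfl
  have hmp : MeasurePreserving e volume volume := by
    have h1 := EuclideanSpace.volume_preserving_symm_measurableEquiv_toLp (Fin d)
    have h2 := measurePreserving_piCongrLeft
      (fun _ : {w : InfinitePlace F // w.IsReal} => (volume : Measure ℝ)) eqv
    have hdirac : (volume : Measure ({w : InfinitePlace F // w.IsComplex} → ℂ))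
        = Measure.dirac 0 := by
      rw [volume_pi, Measure.pi_of_empty _ 0]
    have h3 : MeasurePreserving (fun x : ({w : InfinitePlace F // w.IsReal} → ℝ) =>
        (x, (0 : {w : InfinitePlace F // w.IsComplex} → ℂ))) volume volume := by
      refine ⟨measurable_id.prodMk measurable_const, ?_⟩
      rw [show (volume : Measure (mixedEmbedding.mixedSpace F))
          = (volume : Measure ({w : InfinitePlace F // w.IsReal} → ℝ)).prod volume from rfl,
        hdirac, Measure.prod_dirac]
    have hfun : (⇑e) = (fun x : ({w : InfinitePlace F // w.IsReal} → ℝ) =>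
          (x, (0 : {w : InfinitePlace F // w.IsComplex} → ℂ)))
        ∘ (⇑(MeasurableEquiv.piCongrLeft (fun _ : {w : InfinitePlace F // w.IsReal} => ℝ) eqv))
        ∘ (⇑(MeasurableEquiv.toLp 2 (Fin d → ℝ)).symm) := by
      funext v
      refine Prod.ext ?_ rfl
      funext w
      obtain ⟨i, rfl⟩ := eqv.surjective w
      simp only [Function.comp_apply]
      rw [MeasurableEquiv.piCongrLeft_apply_apply]
      rw [he_apply]
      show v (eqv.symm (eqv i)) = _
      rw [Equiv.symm_apply_apply]
      rfl
    have := h3.comp (h2.comp h1)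
    rwa [← hfun] at this
  have hPhiE : ∀ x : F, e (Phi F σ x) = mixedEmbedding F x := by
    intro x
    rw [he_apply]
    refine Prod.ext ?_ (Subsingleton.elim _ _)
    funext w
    obtain ⟨i, rfl⟩ := eqv.surjective w
    show (Phi F σ x) (eqv.symm (eqv i)) = (mixedEmbedding F x).1 (eqv i)
    rw [Equiv.symm_apply_apply, mixedEmbedding.mixedEmbedding_apply_isReal, hPhiap]
    exact (heqv i x).symm
  -- the constants
  set D : ℝ := Real.sqrt |(discr F : ℝ)| with hDdef
  have hDpos : 0 < D := Real.sqrt_pos.mpr (abs_pos.mpr (by exact_mod_cast discr_ne_zero F))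
  haveI : Nontrivial (EuclideanSpace ℝ (Fin d)) :=
    Module.nontrivial_of_finrank_pos (R := ℝ) (by rw [finrank_euclideanSpace_fin]; exact hd)
  set B : ℝ := (volume (Metric.ball (0 : EuclideanSpace ℝ (Fin d)) 1)).toReal with hBdef
  have hBpos : 0 < B :=
    ENNReal.toReal_pos (Metric.measure_ball_pos volume _ one_pos).ne' measure_ball_lt_top.ne
  refine ⟨B, hBpos, 2 ^ d * D, by positivity, fun Λ hΛ => ?_⟩
  -- setup for a fixed nonzero fractional ideal
  set I : (FractionalIdeal (𝓞 F)⁰ F)ˣ := Units.mk0 Λ hΛ with hIdef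
  have hlat : latticeOf F σ Λ = ZLattice.comap ℝ (mixedEmbedding.idealLattice F I) e.toLinearMap := by
    ext v
    simp only [latticeOf, Submodule.mem_map, Submodule.restrictScalars_mem,
      FractionalIdeal.mem_coe, ZLattice.comap, Submodule.mem_comap,
      LinearMap.coe_restrictScalars, ContinuousLinearEquiv.coe_coe,
      mixedEmbedding.mem_idealLattice]
    constructor
    · rintro ⟨x, hx, rfl⟩
      exact ⟨x, hx, (hPhiE x).symm⟩
    · rintro ⟨y, hy, hyv⟩
      exact ⟨y, hy, e.injective (by rw [hPhiE y, hyv]; rfl)⟩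
  rw [hlat]
  set L : Submodule ℤ (EuclideanSpace ℝ (Fin d)) :=
    ZLattice.comap ℝ (mixedEmbedding.idealLattice F I) e.toLinearMap with hLdef
  set N : ℝ := ((FractionalIdeal.absNorm Λ : ℚ) : ℝ) with hNdef
  have hNQpos : (0 : ℚ) < FractionalIdeal.absNorm Λ :=
    lt_of_le_of_ne (FractionalIdeal.absNorm_nonneg Λ)
      (fun h => hΛ (FractionalIdeal.absNorm_eq_zero_iff.mp h.symm))
  have hNpos : (0 : ℝ) < N := by rw [hNdef]; exact_mod_cast hNQpos
  have hcov : covol L = N * D := by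
    rw [covol, hLdef, ZLattice.covolume_comap _ _ _ hmp, mixedEmbedding.covolume_idealLattice]
    have h0 : InfinitePlace.nrComplexPlaces F = 0 := Fintype.card_eq_zero
    rw [h0, pow_zero, mul_one]
    rfl
  -- the norm lower bound for nonzero lattice vectors
  have hnorm_ge : ∀ x : F, x ∈ Λ → x ≠ 0 →
      (FractionalIdeal.absNorm Λ : ℚ) ≤ |Algebra.norm ℚ x| := by
    intro x hx hx0
    have hsp : FractionalIdeal.spanSingleton (𝓞 F)⁰ x ≤ Λ :=
      FractionalIdeal.spanSingleton_le_iff_mem.mpr hx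
    have hJle : Λ⁻¹ * FractionalIdeal.spanSingleton (𝓞 F)⁰ x ≤ 1 := by
      calc Λ⁻¹ * FractionalIdeal.spanSingleton (𝓞 F)⁰ x ≤ Λ⁻¹ * Λ :=
            mul_le_mul_right hsp _
        _ = 1 := inv_mul_cancel₀ hΛ
    have hspn0 : FractionalIdeal.spanSingleton (𝓞 F)⁰ x ≠ 0 :=
      fun h => hx0 (FractionalIdeal.spanSingleton_eq_zero_iff.mp h)
    have hJne : Λ⁻¹ * FractionalIdeal.spanSingleton (𝓞 F)⁰ x ≠ 0 :=
      mul_ne_zero (inv_ne_zero hΛ) hspn0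
    obtain ⟨J₀, hJ₀⟩ := FractionalIdeal.le_one_iff_exists_coeIdeal.mp hJle
    have h1 : (1 : ℚ) ≤ FractionalIdeal.absNorm (Λ⁻¹ * FractionalIdeal.spanSingleton (𝓞 F)⁰ x) := by
      rw [← hJ₀, FractionalIdeal.coeIdeal_absNorm]
      have hJ₀0 : J₀ ≠ 0 := by
        rintro rfl
        rw [← hJ₀] at hJne
        exact hJne (by simp)
      exact_mod_cast Nat.one_le_iff_ne_zero.mpr
        (fun h => hJ₀0 (Ideal.absNorm_eq_zero_iff.mp h))
    have h2 : FractionalIdeal.absNorm (Λ⁻¹ * FractionalIdeal.spanSingleton (𝓞 F)⁰ x)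
        = (FractionalIdeal.absNorm Λ)⁻¹ * |Algebra.norm ℚ x| := by
      rw [map_mul, map_inv₀, FractionalIdeal.absNorm_span_singleton]
    rw [h2] at h1
    have := mul_le_mul_of_nonneg_left h1 hNQpos.le
    rwa [mul_one, ← mul_assoc, mul_inv_cancel₀ hNQpos.ne', one_mul] at this
  have hcardIP : Fintype.card (InfinitePlace F) = d := by
    rw [← Fintype.card_fin d]
    exact (Fintype.card_congr ((eqv.trans (Equiv.subtypeUnivEquiv hwreal)).symm))
  have hmem : ∀ b : EuclideanSpace ℝ (Fin d), b ∈ L → b ≠ 0 → N ≤ ‖b‖ ^ d := by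
    intro b hb hb0
    rw [← hlat, latticeOf] at hb
    obtain ⟨x, hx', rfl⟩ := hb
    have hx : x ∈ Λ := hx'
    have hx0 : x ≠ 0 := by
      rintro rfl
      exact hb0 (map_zero _)
    have h1 : N ≤ ((|Algebra.norm ℚ x| : ℚ) : ℝ) := by
      rw [hNdef]
      exact_mod_cast hnorm_ge x hx hx0
    have h2 : ((|Algebra.norm ℚ x| : ℚ) : ℝ) = ∏ w : InfinitePlace F, w x ^ w.mult := by
      exact (InfinitePlace.prod_eq_abs_norm x).symm
    have h3 : ∏ w : InfinitePlace F, (w x : ℝ) ^ w.mult ≤ ‖Phi F σ x‖ ^ d := by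
      have hstep : ∀ w : InfinitePlace F, w x ≤ ‖Phi F σ x‖ := by
        intro w
        obtain ⟨i, hi⟩ := eqv.surjective ⟨w, hwreal w⟩
        have hw : w x = |σ i x| := by
          rw [← InfinitePlace.norm_embedding_of_isReal (hwreal w), Real.norm_eq_abs]
          congr 1
          have h5 := heqv i x
          rw [hi] at h5
          exact h5
        rw [hw, ← hPhiap x i]
        exact abs_coord_le_norm (Phi F σ x) i
      calc ∏ w : InfinitePlace F, (w x : ℝ) ^ w.mult
          = ∏ w : InfinitePlace F, (w x : ℝ) := by
            refine Finset.prod_congr rfl fun w _ => ?_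
            rw [InfinitePlace.mult, if_pos (hwreal w), pow_one]
        _ ≤ ∏ _w : InfinitePlace F, ‖Phi F σ x‖ :=
            Finset.prod_le_prod (fun w _ => apply_nonneg w x) (fun w _ => hstep w)
        _ = ‖Phi F σ x‖ ^ d := by rw [Finset.prod_const, Finset.card_univ, hcardIP]
    calc N ≤ _ := h1
      _ = _ := h2
      _ ≤ _ := h3
  -- the set of norms of nonzero lattice vectors
  set S : Set ℝ := {t : ℝ | ∃ b ∈ L, b ≠ 0 ∧ ‖b‖ = t} with hSdef
  have hrlat : rlat L = 1 / 2 * sInf S := rfl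
  have hSne : S.Nonempty := by
    have hbot : (Λ : Submodule (𝓞 F) F) ≠ ⊥ := by
      rw [ne_eq, FractionalIdeal.coeToSubmodule_eq_bot]
      exact hΛ
    obtain ⟨x, hx, hx0⟩ := Submodule.exists_mem_ne_zero_of_ne_bot hbot
    refine ⟨‖Phi F σ x‖, Phi F σ x, ?_, ?_, rfl⟩
    · rw [← hlat, latticeOf]
      exact Submodule.mem_map_of_mem (by rwa [Submodule.restrictScalars_mem])
    · intro h
      exact hx0 (hPhiInj (by rw [h, map_zero]))
  have hSbdd : BddBelow S := ⟨0, fun t ⟨b, _, _, hb⟩ => hb ▸ norm_nonneg b⟩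
  have hSnn : ∀ t ∈ S, (0 : ℝ) ≤ t := fun t ⟨b, _, _, hb⟩ => hb ▸ norm_nonneg b
  have hm0 : 0 ≤ sInf S := le_csInf hSne hSnn
  -- upper bound : covol ≤ 2^d * D * rlat^d
  have hmlow : N ^ ((1 : ℝ) / d) ≤ sInf S := by
    refine le_csInf hSne fun t ht => ?_
    obtain ⟨b, hbL, hb0, rfl⟩ := ht
    have h := hmem b hbL hb0
    calc N ^ ((1:ℝ)/d) ≤ (‖b‖ ^ d) ^ ((1:ℝ)/d) :=
          Real.rpow_le_rpow hNpos.le h (by positivity)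
      _ = ‖b‖ := by
          rw [← Real.rpow_natCast ‖b‖ d, ← Real.rpow_mul (norm_nonneg b),
            mul_one_div_cancel hd', Real.rpow_one]
  have hNle : N ≤ sInf S ^ d := by
    have h0 : 0 ≤ N ^ ((1:ℝ)/d) := Real.rpow_nonneg hNpos.le _
    have hpow := pow_le_pow_left₀ h0 hmlow d
    rwa [← Real.rpow_natCast (N ^ ((1:ℝ)/d)) d, ← Real.rpow_mul hNpos.le,
      one_div_mul_cancel hd', Real.rpow_one] at hpow
  have hub : covol L ≤ 2 ^ d * D * rlat L ^ d := by
    rw [hcov, hrlat]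
    have h22 : (2:ℝ)^d * (1/2)^d = 1 := by
      rw [← mul_pow]
      norm_num
    calc N * D ≤ sInf S ^ d * D := mul_le_mul_of_nonneg_right hNle hDpos.le
      _ = 2 ^ d * D * (1/2 * sInf S) ^ d := by
          rw [mul_pow]
          linear_combination (-(D * sInf S ^ d)) * h22
  -- lower bound : B * rlat^d ≤ covol, via Minkowski
  set V : ℝ := covol L with hVdef
  have hVpos : 0 < V := ZLattice.covolume_pos L volume
  set r₀ : ℝ := (2 ^ d * V / B) ^ ((1:ℝ)/d) with hr₀def
  have hr₀base : (0:ℝ) ≤ 2 ^ d * V / B := by positivity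
  have hr₀nn : 0 ≤ r₀ := Real.rpow_nonneg hr₀base _
  have hr₀pow : r₀ ^ d = 2 ^ d * V / B := by
    rw [hr₀def, ← Real.rpow_natCast _ d, ← Real.rpow_mul hr₀base,
      one_div_mul_cancel hd', Real.rpow_one]
  let bL := Module.Free.chooseBasis ℤ L
  have hfund := ZLattice.isAddFundamentalDomain bL volume
  have hfund' : IsAddFundamentalDomain L.toAddSubgroup
      (ZSpan.fundamentalDomain (bL.ofZLatticeBasis ℝ)) volume := by
    have h := ZSpan.isAddFundamentalDomain' (bL.ofZLatticeBasis ℝ) volume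
    rwa [bL.ofZLatticeBasis_span ℝ] at h
  haveI : Countable L.toAddSubgroup := by
    change Countable L
    infer_instance
  have hVeq : volume (ZSpan.fundamentalDomain (bL.ofZLatticeBasis ℝ)) = ENNReal.ofReal V := by
    have hfin : volume (ZSpan.fundamentalDomain (bL.ofZLatticeBasis ℝ)) ≠ ⊤ :=
      (ZSpan.fundamentalDomain_isBounded _).measure_lt_top.ne
    rw [hVdef, covol, ZLattice.covolume_eq_measure_fundamentalDomain L volume hfund,
      measureReal_def, ENNReal.ofReal_toReal hfin]
  have hminf : sInf S ≤ r₀ := by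
    refine le_of_forall_gt_imp_ge_of_dense fun r hr => ?_
    have hrpos : 0 < r := lt_of_le_of_lt hr₀nn hr
    have hlt : (2:ℝ) ^ d * V < B * r ^ d := by
      have hpp : r₀ ^ d < r ^ d := pow_lt_pow_left₀ hr hr₀nn hd0
      rw [hr₀pow] at hpp
      calc (2:ℝ)^d * V = B * (2^d * V / B) := by field_simp
        _ < B * r ^ d := by gcongr
    have hcond : volume (ZSpan.fundamentalDomain (bL.ofZLatticeBasis ℝ)) *
        2 ^ finrank ℝ (EuclideanSpace ℝ (Fin d)) <
        volume (Metric.ball (0 : EuclideanSpace ℝ (Fin d)) r) := by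
      rw [hVeq, Measure.addHaar_ball volume _ hrpos.le, finrank_euclideanSpace_fin,
        show (volume (Metric.ball (0 : EuclideanSpace ℝ (Fin d)) 1)) = ENNReal.ofReal B from
          (ENNReal.ofReal_toReal measure_ball_lt_top.ne).symm,
        show ((2 : ENNReal) ^ d) = ENNReal.ofReal ((2:ℝ) ^ d) by
          rw [ENNReal.ofReal_pow zero_le_two, ENNReal.ofReal_ofNat],
        ← ENNReal.ofReal_mul (by positivity), ← ENNReal.ofReal_mul (by positivity)]
      refine (ENNReal.ofReal_lt_ofReal_iff (by positivity)).mpr ?_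
      nlinarith [hlt]
    obtain ⟨x, hx0, hxmem⟩ := exists_ne_zero_mem_lattice_of_measure_mul_two_pow_lt_measure
      hfund' (fun y hy => by simpa [mem_ball_zero_iff] using hy) (convex_ball 0 r) hcond
    have hxL : (x : EuclideanSpace ℝ (Fin d)) ∈ L := x.2
    have hxne : (x : EuclideanSpace ℝ (Fin d)) ≠ 0 := by
      intro h
      exact hx0 (Subtype.ext h)
    have hxS : ‖(x : EuclideanSpace ℝ (Fin d))‖ ∈ S := ⟨_, hxL, hxne, rfl⟩
    have h6 := csInf_le hSbdd hxS
    have hxr : ‖(x : EuclideanSpace ℝ (Fin d))‖ < r := by rwa [mem_ball_zero_iff] at hxmem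
    linarith
  have hlb : B * rlat L ^ d ≤ covol L := by
    rw [hrlat]
    have h2 : (1/2 * sInf S) ^ d ≤ (1/2 * r₀) ^ d :=
      pow_le_pow_left₀ (by positivity) (by linarith) d
    calc B * (1/2 * sInf S) ^ d ≤ B * (1/2 * r₀) ^ d :=
          mul_le_mul_of_nonneg_left h2 hBpos.le
      _ = V := by
          rw [mul_pow, hr₀pow]
          have h22 : (2:ℝ)^d * (1/2)^d = 1 := by
            rw [← mul_pow]
            norm_num
          have hstep : B * ((1/2:ℝ)^d * (2^d * V / B)) = ((2:ℝ)^d * (1/2)^d) * V * (B / B) := by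
            ring
          rw [hstep, div_self hBpos.ne', mul_one, h22, one_mul]
      _ = covol L := hVdef.symm
  exact ⟨hlb, hub⟩

end Stmt12
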